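/- Let K be a field and let b_1, …, b_n, T ∈ K be nonzero. Suppose w_1, …, w_{n-1}, u ∈ K are nonzero, satisfy for each i = 1,…,n−1 the equation w_i + Σ_{j≠i} b_j w_i/w_j − b_i/w_i − Σ_{j≠i} b_i w_j/w_i = 0, and also u^2 = b_n T (1 + Σ_{i=1}^{n-1} w_i)^2 (the equation ∂_u W = 0). Then 1 + Σ_{i=1}^{n-1} w_i ≠ 0 and w_i^2 = b_i for every i. -/

import Mathlib

open Finset

theorem critical_points_force_wsq
    {K : Type*} [Field K] (m : ℕ) (hm : 1 ≤ m)
    (b : Fin (m + 1) → K) (T : K)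
    (hb : ∀ i, b i ≠ 0) (hT : T ≠ 0)
    (w : Fin m → K) (u : K)
    (hw : ∀ i, w i ≠ 0) (hu : u ≠ 0)
    (heq : ∀ i, w i + (∑ j ∈ univ.erase i, b j.castSucc * w i / w j)
        - b i.castSucc / w i - (∑ j ∈ univ.erase i, b i.castSucc * w j / w i) = 0)
    (hueq : u ^ 2 = b (Fin.last m) * T * (1 + ∑ i, w i) ^ 2) :
    (1 + ∑ i, w i ≠ 0) ∧ ∀ i, w i ^ 2 = b i.castSucc := by
  set L := ∑ i, w i with hL
  have hLne : 1 + L ≠ 0 := by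
    intro h
    apply hu
    have h2 : u ^ 2 = 0 := by rw [hueq, h]; ring
    exact pow_eq_zero_iff (by norm_num) |>.mp h2
  set S := ∑ i, b i.castSucc / w i with hS
  have key : ∀ i, w i * w i * (1 + S) = b i.castSucc * (1 + L) := by
    intro i
    have h := heq i
    have e1 : ∑ j ∈ univ.erase i, b j.castSucc * w i / w j
        = w i * (S - b i.castSucc / w i) := by
      rw [hS, ← Finset.sum_erase_eq_sub (mem_univ i), Finset.mul_sum]
      exact Finset.sum_congr rfl fun j _ => by ring
    have e2 : ∑ j ∈ univ.erase i, b i.castSucc * w j / w i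
        = (b i.castSucc / w i) * (L - w i) := by
      rw [hL, ← Finset.sum_erase_eq_sub (mem_univ i), Finset.mul_sum]
      exact Finset.sum_congr rfl fun j _ => by ring
    rw [e1, e2] at h
    field_simp [hw i] at h
    linear_combination h
  have key2 : ∀ i, w i * (1 + S) = (b i.castSucc / w i) * (1 + L) := by
    intro i
    have hcancel : w i * (b i.castSucc / w i) = b i.castSucc := by
      rw [mul_div_assoc']
      exact mul_div_cancel_left₀ _ (hw i)
    refine mul_left_cancel₀ (hw i) ?_
    rw [← mul_assoc, key i, ← mul_assoc, hcancel]
  have hsum : L * (1 + S) = S * (1 + L) := by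
    rw [hL, hS, Finset.sum_mul, Finset.sum_mul]
    exact Finset.sum_congr rfl fun i _ => key2 i
  have hLS : L = S := by linear_combination hsum
  refine ⟨hLne, fun i => ?_⟩
  have h2 := key i
  rw [← hLS] at h2
  rw [sq]
  exact mul_right_cancel₀ hLne h2
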